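/- arXiv:2302.00139 — 2 statements merged into one kernel-verified Lean document; each statement's English description precedes it below -/
import Mathlib

section
/- The function g(z) = (z-1)^2 - z (log z)^2 defined on (0,∞) attains its unique global minimum value 0 at z = 1. -/
open Real

private lemma g_key_gt_one : ∀ z : ℝ, 1 < z → z * (Real.log z) ^ 2 < (z - 1) ^ 2 := by
  intro z hz
  have hz0 : (0:ℝ) < z := lt_trans one_pos hz
  have hs0 : (0:ℝ) < Real.sqrt z := Real.sqrt_pos.mpr hz0
  have hsq : Real.sqrt z * Real.sqrt z = z := Real.mul_self_sqrt hz0.le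
  have hL : 0 < Real.log z := Real.log_pos hz
  -- exp (log z / 2) = √z
  have hexp : Real.exp (Real.log z / 2) = Real.sqrt z := by
    have h2 : Real.exp (Real.log z / 2) * Real.exp (Real.log z / 2) = z := by
      rw [← Real.exp_add]
      have : Real.log z / 2 + Real.log z / 2 = Real.log z := by ring
      rw [this, Real.exp_log hz0]
    calc Real.exp (Real.log z / 2)
        = Real.sqrt (Real.exp (Real.log z / 2) * Real.exp (Real.log z / 2)) :=
          (Real.sqrt_mul_self (Real.exp_nonneg _)).symm
      _ = Real.sqrt z := by rw [h2]
  have hsinh : Real.log z / 2 < Real.sinh (Real.log z / 2) :=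
    Real.self_lt_sinh_iff.mpr (by linarith)
  rw [Real.sinh_eq, Real.exp_neg, hexp] at hsinh
  -- hence log z < √z - 1/√z, so √z * log z < z - 1
  have h1 : Real.sqrt z * Real.log z < z - 1 := by
    have hinv : Real.sqrt z * (Real.sqrt z)⁻¹ = 1 := mul_inv_cancel₀ (ne_of_gt hs0)
    nlinarith [mul_lt_mul_of_pos_left hsinh hs0]
  have hpos : 0 ≤ Real.sqrt z * Real.log z := by positivity
  have h3 : (Real.sqrt z * Real.log z) * (Real.sqrt z * Real.log z) < (z - 1) * (z - 1) :=
    mul_lt_mul'' h1 h1 hpos hpos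
  calc z * (Real.log z) ^ 2 = (Real.sqrt z * Real.log z) * (Real.sqrt z * Real.log z) := by
        linear_combination (-(Real.log z) ^ 2) * hsq
    _ < (z - 1) * (z - 1) := h3
    _ = (z - 1) ^ 2 := by ring

private lemma g_key : ∀ z : ℝ, 0 < z → z ≠ 1 → z * (Real.log z) ^ 2 < (z - 1) ^ 2 := by
  intro z hz hne
  rcases lt_or_gt_of_ne hne with h | h
  · have hinv : 1 < 1 / z := by rw [lt_div_iff₀ hz]; linarith
    have key := g_key_gt_one (1 / z) hinv
    rw [one_div, Real.log_inv] at key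
    have key' : z⁻¹ * (Real.log z) ^ 2 < (z⁻¹ - 1) ^ 2 := by
      simpa [neg_pow] using key
    have hz2 : (0:ℝ) < z ^ 2 := by positivity
    have := mul_lt_mul_of_pos_left key' hz2
    have hzne : z ≠ 0 := ne_of_gt hz
    calc z * (Real.log z) ^ 2 = z ^ 2 * (z⁻¹ * (Real.log z) ^ 2) := by
          field_simp
      _ < z ^ 2 * (z⁻¹ - 1) ^ 2 := this
      _ = (z - 1) ^ 2 := by field_simp; ring
  · exact g_key_gt_one z h

/-- The function `g z = (z-1)^2 - z (log z)^2` on `(0, ∞)` attains its unique global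
minimum value `0` at `z = 1`. -/
theorem g_unique_global_min :
    (∀ z : ℝ, 0 < z → 0 ≤ (z - 1) ^ 2 - z * (Real.log z) ^ 2) ∧
    ((1 : ℝ) - 1) ^ 2 - 1 * (Real.log 1) ^ 2 = 0 ∧
    (∀ z : ℝ, 0 < z → (z - 1) ^ 2 - z * (Real.log z) ^ 2 = 0 → z = 1) := by
  refine ⟨?_, by simp, ?_⟩
  · intro z hz
    rcases eq_or_ne z 1 with rfl | hne
    · simp
    · linarith [g_key z hz hne]
  · intro z hz heq
    by_contra hne
    linarith [g_key z hz hne]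
end

section
/- Let φ_h = ∑_i φ_i ϕ_i be a finite element function with nodal values φ_i > 0 with respect to nonnegative basis functions ϕ_i satisfying ∑_i ∫ ϕ_i = |Ω|, and let ψ_h = ∑_i ψ_i ϕ_i. If there exist constants A, B ≥ 0 with log( ∑_i e^{μψ_i} ∫ϕ_i ) ≤ A + B μ², then (φ_h, ψ_h)_h := ∑_i φ_i ψ_i ∫ϕ_i satisfies (φ_h, ψ_h)_h ≤ (1/μ)(φ_h, log(φ_h/φ̄))_h + (‖φ_h‖_{L¹}/μ)(A − log|Ω|) + Bμ‖φ_h‖_{L¹}, where ‖φ_h‖_{L¹} = ∑_i φ_i ∫ϕ_i and φ̄ = ‖φ_h‖_{L¹}/|Ω|, and (φ_h, log(φ_h/φ̄))_h = ∑_i φ_i log(φ_i/φ̄) ∫ϕ_i. -/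
open Finset in
theorem discrete_duality_entropy {ι : Type*} (s : Finset ι) (w φ ψ : ι → ℝ)
    (μ A B vol : ℝ) (hμ : 0 < μ) (hA : 0 ≤ A) (hB : 0 ≤ B)
    (hw : ∀ i ∈ s, 0 ≤ w i) (hφ : ∀ i ∈ s, 0 < φ i)
    (hvol : 0 < vol) (hW : ∑ i ∈ s, w i = vol)
    (hlog : Real.log (∑ i ∈ s, Real.exp (μ * ψ i) * w i) ≤ A + B * μ ^ 2) :
    ∑ i ∈ s, φ i * ψ i * w i ≤
      (1 / μ) * ∑ i ∈ s, φ i * Real.log (φ i / ((∑ j ∈ s, φ j * w j) / vol)) * w i +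
      ((∑ j ∈ s, φ j * w j) / μ) * (A - Real.log vol) +
      B * μ * (∑ j ∈ s, φ j * w j) := by
  set M : ℝ := ∑ j ∈ s, φ j * w j with hM
  have hMpos : 0 < M := by
    rw [hM]
    have : ∀ i ∈ s, 0 ≤ φ i * w i := fun i hi => mul_nonneg (hφ i hi).le (hw i hi)
    rcases Finset.exists_lt_of_sum_lt (f := fun _ : ι => (0:ℝ)) (g := fun i => w i)
      (by rw [hW, Finset.sum_const, smul_zero]; exact hvol) with ⟨i, hi, hwi⟩
    calc (0:ℝ) < φ i * w i := mul_pos (hφ i hi) hwi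
    _ ≤ ∑ j ∈ s, φ j * w j := Finset.single_le_sum this hi
  -- weights p i = φ i * w i / M
  set p : ι → ℝ := fun i => φ i * w i / M with hp
  set x : ι → ℝ := fun i => μ * ψ i - Real.log (φ i / (M / vol)) with hx
  have hp0 : ∀ i ∈ s, 0 ≤ p i := fun i hi =>
    div_nonneg (mul_nonneg (hφ i hi).le (hw i hi)) hMpos.le
  have hp1 : ∑ i ∈ s, p i = 1 := by
    rw [hp]
    simp only
    rw [← Finset.sum_div, ← hM, div_self hMpos.ne']
  have hjensen := convexOn_exp.map_sum_le (t := s) (w := p) (p := x) hp0 hp1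
    (fun i _ => Set.mem_univ _)
  simp only [smul_eq_mul] at hjensen
  set S : ℝ := ∑ i ∈ s, Real.exp (μ * ψ i) * w i with hS
  have hkey : ∑ i ∈ s, p i * Real.exp (x i) = S / vol := by
    rw [hS, Finset.sum_div]
    apply Finset.sum_congr rfl
    intro i hi
    have hφi := hφ i hi
    rw [hp, hx]
    simp only
    rw [Real.exp_sub, Real.exp_log (by positivity)]
    field_simp
  have hSvolpos : 0 < S / vol := lt_of_lt_of_le (Real.exp_pos _) (hkey ▸ hjensen)
  have hSpos : 0 < S := by
    rcases div_pos_iff.mp hSvolpos with ⟨h, _⟩ | ⟨_, h⟩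
    · exact h
    · linarith
  have h1 : ∑ i ∈ s, p i * x i ≤ Real.log S - Real.log vol := by
    have := Real.log_le_log (Real.exp_pos _) (hkey ▸ hjensen)
    rwa [Real.log_exp, Real.log_div hSpos.ne' hvol.ne'] at this
  have h2 : ∑ i ∈ s, p i * x i ≤ A + B * μ ^ 2 - Real.log vol := by
    linarith
  have hexp : M * ∑ i ∈ s, p i * x i =
      μ * ∑ i ∈ s, φ i * ψ i * w i
        - ∑ i ∈ s, φ i * Real.log (φ i / (M / vol)) * w i := by
    rw [Finset.mul_sum, Finset.mul_sum, ← Finset.sum_sub_distrib]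
    apply Finset.sum_congr rfl
    intro i hi
    rw [hp, hx]
    field_simp
  set E : ℝ := ∑ i ∈ s, φ i * Real.log (φ i / (M / vol)) * w i
  set T : ℝ := ∑ i ∈ s, φ i * ψ i * w i
  have h3 : μ * T - E ≤ M * (A + B * μ ^ 2 - Real.log vol) := by
    rw [← hexp]
    exact mul_le_mul_of_nonneg_left h2 hMpos.le
  have h4 : T ≤ (E + M * (A - Real.log vol) + B * μ ^ 2 * M) / μ := by
    rw [le_div_iff₀ hμ]; nlinarith
  calc T ≤ (E + M * (A - Real.log vol) + B * μ ^ 2 * M) / μ := h4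
    _ = 1 / μ * E + M / μ * (A - Real.log vol) + B * μ * M := by
        field_simp
end
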